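/- Let Z ⊆ [0,∞) be a random closed set and φ a measurable map on closed sets with φ(Z) ⊆ Z, which is local (φ(Z ∩ [s,t]) = φ(Z) ∩ [s,t] a.s. for all 0 < s < t) and stationary (φ(Z + t) = φ(Z) + t a.s.). Suppose that for two events A⁻, A⁺ defined for each rational q > 0 by A_q⁺ = {inf(Z ∩ (q,∞)) = inf(φ(Z) ∩ (q,∞))} and A_q⁻ = {sup(Z ∩ (0,q)) = sup(φ(Z) ∩ (0,q))}, each event has probability 0 or 1 independently of q, and almost surely A_q⁺ holds for all rational q simultaneously (the case y = (·,1)). Then almost surely φ(Z) ⊇ Ẑ ∩ Z in the following sense: if t ∈ Z and there exist qₙ ∈ ℚ with qₙ ↗ t and Z ∩ (qₙ, t) ≠ ∅ for all n, then t ∈ φ(Z). In particular if additionally Z has no isolated points from the left along rationals, then φ(Z) = Z a.s. -/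
import Mathlib


open MeasureTheory Set Filter

/-- **Combinatorial core of the triviality of local stationary openings.**
Let `φ` be a local stationary opening (`φ(Z) ⊆ Z` closed) of a random closed
set `Z ⊆ [0,∞)`, and suppose that almost surely the events
`A_q⁺ : inf(Z ∩ (q,∞)) = inf(φ(Z) ∩ (q,∞))` hold simultaneously for all
rationals `q > 0`. Then almost surely: every `t ∈ Z` that is approximable from
the left by rationals `qₙ ↗ t` with `Z ∩ (qₙ, t) ≠ ∅` belongs to `φ(Z)`; in
particular, if every point of `Z` is so approximable then `φ(Z) = Z`. -/
theorem opening_left_approximation {Ω : Type*} [MeasurableSpace Ω]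
    (P : Measure Ω) [IsProbabilityMeasure P]
    (Z : Ω → Set ℝ) (φ : Set ℝ → Set ℝ)
    (hsub : ∀ ω, φ (Z ω) ⊆ Z ω) (hclosed : ∀ ω, IsClosed (φ (Z ω)))
    (hloc : ∀ᵐ ω ∂P, ∀ s t : ℝ, 0 < s → s < t →
      φ (Z ω ∩ Set.Icc s t) = φ (Z ω) ∩ Set.Icc s t)
    (hstat : ∀ᵐ ω ∂P, ∀ t : ℝ, 0 ≤ t →
      φ ((fun x => x + t) '' Z ω) = (fun x => x + t) '' φ (Z ω))
    (hplus : ∀ᵐ ω ∂P, ∀ q : ℚ, 0 < q →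
      sInf (Z ω ∩ Set.Ioi (q:ℝ)) = sInf (φ (Z ω) ∩ Set.Ioi (q:ℝ))) :
    ∀ᵐ ω ∂P,
      (∀ t ∈ Z ω,
        (∃ q : ℕ → ℚ,
          (∀ n, 0 < ((q n : ℚ):ℝ) ∧ ((q n : ℚ):ℝ) < t ∧
            (Z ω ∩ Set.Ioo ((q n : ℚ):ℝ) t).Nonempty) ∧
          Tendsto (fun n => ((q n : ℚ):ℝ)) atTop (nhds t)) →
        t ∈ φ (Z ω)) ∧
      ((∀ t ∈ Z ω, ∃ q : ℕ → ℚ,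
          (∀ n, 0 < ((q n : ℚ):ℝ) ∧ ((q n : ℚ):ℝ) < t ∧
            (Z ω ∩ Set.Ioo ((q n : ℚ):ℝ) t).Nonempty) ∧
          Tendsto (fun n => ((q n : ℚ):ℝ)) atTop (nhds t)) →
        φ (Z ω) = Z ω) := by
  filter_upwards [hplus] with ω hω
  have key : ∀ t ∈ Z ω,
      (∃ q : ℕ → ℚ,
        (∀ n, 0 < ((q n : ℚ):ℝ) ∧ ((q n : ℚ):ℝ) < t ∧
          (Z ω ∩ Set.Ioo ((q n : ℚ):ℝ) t).Nonempty) ∧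
        Tendsto (fun n => ((q n : ℚ):ℝ)) atTop (nhds t)) →
      t ∈ φ (Z ω) := by
    rintro t ht ⟨q, hq, hqt⟩
    set f : ℕ → ℝ := fun n => sInf (φ (Z ω) ∩ Set.Ioi ((q n : ℚ):ℝ)) with hf
    have hmem : ∀ n, f n ∈ φ (Z ω) ∧ ((q n : ℚ):ℝ) ≤ f n ∧ f n < t := by
      intro n
      obtain ⟨h0, hlt, z, hzZ, hz1, hz2⟩ := hq n
      have hq0 : (0:ℚ) < q n := by exact_mod_cast h0
      have heq := hω (q n) hq0
      have hbdd : BddBelow (Z ω ∩ Set.Ioi ((q n : ℚ):ℝ)) :=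
        ⟨((q n : ℚ):ℝ), fun x hx => le_of_lt hx.2⟩
      have hbddφ : BddBelow (φ (Z ω) ∩ Set.Ioi ((q n : ℚ):ℝ)) :=
        ⟨((q n : ℚ):ℝ), fun x hx => le_of_lt hx.2⟩
      have hzmem : z ∈ Z ω ∩ Set.Ioi ((q n : ℚ):ℝ) := ⟨hzZ, hz1⟩
      have hlow : ((q n : ℚ):ℝ) ≤ sInf (Z ω ∩ Set.Ioi ((q n : ℚ):ℝ)) :=
        le_csInf ⟨z, hzmem⟩ (fun x hx => le_of_lt hx.2)
      have hne : (φ (Z ω) ∩ Set.Ioi ((q n : ℚ):ℝ)).Nonempty := by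
        by_contra h
        rw [Set.not_nonempty_iff_eq_empty] at h
        rw [h, Real.sInf_empty] at heq
        rw [heq] at hlow
        linarith
      refine ⟨?_, ?_, ?_⟩
      · have h1 : f n ∈ closure (φ (Z ω) ∩ Set.Ioi ((q n : ℚ):ℝ)) :=
          csInf_mem_closure hne hbddφ
        have h2 : closure (φ (Z ω) ∩ Set.Ioi ((q n : ℚ):ℝ)) ⊆ φ (Z ω) := by
          calc closure (φ (Z ω) ∩ Set.Ioi ((q n : ℚ):ℝ))
              ⊆ closure (φ (Z ω)) := closure_mono Set.inter_subset_left
            _ = φ (Z ω) := (hclosed ω).closure_eq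
        exact h2 h1
      · exact le_csInf hne (fun x hx => le_of_lt hx.2)
      · have : f n = sInf (Z ω ∩ Set.Ioi ((q n : ℚ):ℝ)) := heq.symm
        rw [this]
        exact lt_of_le_of_lt (csInf_le hbdd hzmem) hz2
    have htend : Tendsto f atTop (nhds t) := by
      refine tendsto_of_tendsto_of_tendsto_of_le_of_le hqt tendsto_const_nhds
        (fun n => (hmem n).2.1) (fun n => le_of_lt (hmem n).2.2)
    exact (hclosed ω).mem_of_tendsto htend (Filter.Eventually.of_forall (fun n => (hmem n).1))
  refine ⟨key, fun hall => Set.Subset.antisymm (hsub ω) (fun t ht => ?_)⟩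
  exact key t ht (hall t ht)
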